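/- arXiv:2401.15462 — 3 statements merged into one kernel-verified Lean document; each statement's English description precedes it below -/
import Mathlib

section
/- Let D, M ≥ 1, let G(x) = −x·log x − x·log M for x > 0 (and G(0) = 0). Then for all 0 ≤ a, b ≤ D/M and every 0 < μ < 1/e, one has |G(b) − G(a)| ≤ (2μ/M)·log(1/μ) + |b − a|·log(eD/μ). -/
open Real

private noncomputable def Gf (M x : ℝ) : ℝ := -x * Real.log x - x * Real.log M

private lemma Gf_hasDerivAt (M : ℝ) {x : ℝ} (hx : x ≠ 0) :
    HasDerivAt (Gf M) (-(Real.log x + 1) - Real.log M) x := by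
  have h1 : HasDerivAt (fun x : ℝ => -(x * Real.log x)) (-(Real.log x + 1)) x :=
    (Real.hasDerivAt_mul_log hx).neg
  have h2 : HasDerivAt (fun x : ℝ => x * Real.log M) (Real.log M) x := by
    simpa using (hasDerivAt_id x).mul_const (Real.log M)
  have heq : Gf M = fun x => -(x * Real.log x) - x * Real.log M := by
    funext x; simp [Gf, neg_mul]
  rw [heq]
  exact h1.sub h2

private lemma Gf_continuous (M : ℝ) : Continuous (Gf M) := by
  have : Gf M = fun x => Real.negMulLog x - x * Real.log M := by
    funext x; simp [Gf, Real.negMulLog, neg_mul]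
  rw [this]
  exact Real.continuous_negMulLog.sub (continuous_id.mul continuous_const)

private lemma Gf_mono (M c : ℝ) (_hc : 0 < c) (hcM : Real.log c + Real.log M ≤ -1) :
    MonotoneOn (Gf M) (Set.Icc 0 c) := by
  have hint : interior (Set.Icc (0:ℝ) c) = Set.Ioo 0 c := interior_Icc
  apply monotoneOn_of_deriv_nonneg (convex_Icc 0 c) (Gf_continuous M).continuousOn
  · rw [hint]
    intro x hx
    exact ((Gf_hasDerivAt M (ne_of_gt hx.1)).differentiableAt).differentiableWithinAt
  · rw [hint]
    intro x hx
    rw [(Gf_hasDerivAt M (ne_of_gt hx.1)).deriv]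
    have : Real.log x < Real.log c := Real.log_lt_log hx.1 hx.2
    linarith

private lemma stmt_5_aux (D M : ℝ) (hD : 1 ≤ D) (hM : 1 ≤ M)
    (a b : ℝ) (ha0 : 0 ≤ a) (ha1 : a ≤ D / M) (hb0 : 0 ≤ b) (hb1 : b ≤ D / M)
    (μ : ℝ) (hμ0 : 0 < μ) (hμ1 : μ < 1 / Real.exp 1) (hab : a ≤ b) :
    |(-b * Real.log b - b * Real.log M) - (-a * Real.log a - a * Real.log M)| ≤
      2 * μ / M * Real.log (1 / μ) + |b - a| * Real.log (Real.exp 1 * D / μ) := by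
  have hM0 : (0:ℝ) < M := lt_of_lt_of_le one_pos hM
  have hlogM : 0 ≤ Real.log M := Real.log_nonneg hM
  have hlogD : 0 ≤ Real.log D := Real.log_nonneg hD
  have hμe : Real.log μ < -1 := by
    have : μ < Real.exp (-1) := by rwa [Real.exp_neg, ← one_div]
    calc Real.log μ < Real.log (Real.exp (-1)) := Real.log_lt_log hμ0 this
    _ = -1 := Real.log_exp _
  set c := μ / M with hc_def
  have hc0 : 0 < c := div_pos hμ0 hM0
  have hlogc : Real.log c = Real.log μ - Real.log M := Real.log_div (ne_of_gt hμ0) (ne_of_gt hM0)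
  have hμ1' : μ < 1 := hμ1.trans_le (by
    rw [div_le_one (Real.exp_pos 1)]
    exact Real.one_le_exp (by norm_num))
  have hμD : μ ≤ D := le_trans hμ1'.le hD
  have hcD : c ≤ D / M := by rw [hc_def]; gcongr
  -- value at c
  have hGfc : Gf M c = c * Real.log (1 / μ) := by
    rw [Gf, hlogc, Real.log_div one_ne_zero (ne_of_gt hμ0), Real.log_one]
    ring
  have hlog1μ : 0 ≤ Real.log (1 / μ) := by
    rw [Real.log_div one_ne_zero (ne_of_gt hμ0), Real.log_one]; linarith
  set C := c * Real.log (1 / μ) with hC_def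
  have hC0 : 0 ≤ C := mul_nonneg hc0.le hlog1μ
  -- monotonicity and bounds on [0, c]
  have hmono : MonotoneOn (Gf M) (Set.Icc 0 c) := by
    apply Gf_mono M c hc0
    rw [hlogc]; linarith
  have hGf0 : Gf M 0 = 0 := by simp [Gf]
  have hnonneg : ∀ x ∈ Set.Icc (0:ℝ) c, 0 ≤ Gf M x := by
    intro x hx
    have := hmono (Set.left_mem_Icc.mpr hc0.le) hx hx.1
    rwa [hGf0] at this
  have hub : ∀ x ∈ Set.Icc (0:ℝ) c, Gf M x ≤ C := by
    intro x hx
    have := hmono hx (Set.right_mem_Icc.mpr hc0.le) hx.2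
    rwa [hGfc] at this
  -- Lipschitz constant
  set L := Real.log (Real.exp 1 * D / μ) with hL_def
  have hL : L = 1 + Real.log D - Real.log μ := by
    rw [hL_def, Real.log_div (by positivity) (ne_of_gt hμ0),
      Real.log_mul (Real.exp_ne_zero 1) (by linarith), Real.log_exp]
  have hL0 : 0 ≤ L := by rw [hL]; linarith
  -- MVT bound on [c, D/M]
  have hMVT : ∀ x ∈ Set.Icc c (D/M), ∀ y ∈ Set.Icc c (D/M),
      |Gf M y - Gf M x| ≤ L * |y - x| := by
    intro x hx y hy
    have key := Convex.norm_image_sub_le_of_norm_hasDerivWithin_le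
      (f := Gf M) (f' := fun x => -(Real.log x + 1) - Real.log M)
      (s := Set.Icc c (D/M)) (C := L)
      (fun z hz => (Gf_hasDerivAt M (ne_of_gt (lt_of_lt_of_le hc0 hz.1))).hasDerivWithinAt)
      ?_ (convex_Icc _ _) hx hy
    · simpa [Real.norm_eq_abs] using key
    · intro z hz
      have hz0 : 0 < z := lt_of_lt_of_le hc0 hz.1
      have h1 : Real.log z ≤ Real.log (D / M) := Real.log_le_log hz0 hz.2
      have h2 : Real.log c ≤ Real.log z := Real.log_le_log hc0 hz.1
      rw [Real.log_div (by linarith : D ≠ 0) (ne_of_gt hM0)] at h1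
      rw [hlogc] at h2
      rw [Real.norm_eq_abs, abs_le, hL]
      refine ⟨?_, ?_⟩ <;> · linarith
  -- final estimate in terms of Gf
  show |Gf M b - Gf M a| ≤ 2 * μ / M * Real.log (1 / μ) + |b - a| * L
  have h2C : C ≤ 2 * μ / M * Real.log (1 / μ) := by
    have : 2 * μ / M * Real.log (1 / μ) = 2 * C := by rw [hC_def, hc_def]; ring
    rw [this]; linarith
  by_cases hbc : b ≤ c
  · -- both in [0, c]
    have hbm : b ∈ Set.Icc (0:ℝ) c := ⟨hb0, hbc⟩
    have ham : a ∈ Set.Icc (0:ℝ) c := ⟨ha0, hab.trans hbc⟩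
    have h1 : |Gf M b - Gf M a| ≤ C := by
      rw [abs_sub_le_iff]
      constructor
      · linarith [hub b hbm, hnonneg a ham]
      · linarith [hub a ham, hnonneg b hbm]
    have : 0 ≤ |b - a| * L := mul_nonneg (abs_nonneg _) hL0
    linarith
  · push_neg at hbc
    set a' := max a c with ha'_def
    have ha'c : c ≤ a' := le_max_right _ _
    have ha'b : a' ≤ b := max_le hab hbc.le
    have ha'D : a' ≤ D / M := max_le ha1 hcD
    have hA : |Gf M a' - Gf M a| ≤ C := by
      rcases le_or_gt c a with h | h
      · rw [ha'_def, max_eq_left h]; simpa using hC0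
      · rw [ha'_def, max_eq_right h.le]
        rw [abs_sub_le_iff]
        have ham : a ∈ Set.Icc (0:ℝ) c := ⟨ha0, h.le⟩
        have hcm : c ∈ Set.Icc (0:ℝ) c := Set.right_mem_Icc.mpr hc0.le
        constructor
        · linarith [hub c hcm, hnonneg a ham]
        · linarith [hub a ham, hnonneg c hcm]
    have hB : |Gf M b - Gf M a'| ≤ L * |b - a| := by
      have := hMVT a' ⟨ha'c, ha'D⟩ b ⟨hbc.le, hb1⟩
      have hba' : |b - a'| ≤ |b - a| := by
        rw [abs_of_nonneg (by linarith), abs_of_nonneg (by linarith)]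
        have : a ≤ a' := le_max_left _ _
        linarith
      calc |Gf M b - Gf M a'| ≤ L * |b - a'| := this
        _ ≤ L * |b - a| := by exact mul_le_mul_of_nonneg_left hba' hL0
    calc |Gf M b - Gf M a| ≤ |Gf M b - Gf M a'| + |Gf M a' - Gf M a| := abs_sub_le _ _ _
      _ ≤ L * |b - a| + C := add_le_add hB hA
      _ ≤ 2 * μ / M * Real.log (1 / μ) + |b - a| * L := by linarith [mul_comm L |b - a| ▸ le_refl (L * |b-a|)]

/-- Taylor-type estimate for `G(x) = -x log x - x log M`. -/
theorem stmt_5 (D M : ℝ) (hD : 1 ≤ D) (hM : 1 ≤ M)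
    (a b : ℝ) (ha0 : 0 ≤ a) (ha1 : a ≤ D / M) (hb0 : 0 ≤ b) (hb1 : b ≤ D / M)
    (μ : ℝ) (hμ0 : 0 < μ) (hμ1 : μ < 1 / Real.exp 1) :
    |(-b * Real.log b - b * Real.log M) - (-a * Real.log a - a * Real.log M)| ≤
      2 * μ / M * Real.log (1 / μ) + |b - a| * Real.log (Real.exp 1 * D / μ) := by
  rcases le_total a b with h | h
  · exact stmt_5_aux D M hD hM a b ha0 ha1 hb0 hb1 μ hμ0 hμ1 h
  · have := stmt_5_aux D M hD hM b a hb0 hb1 ha0 ha1 μ hμ0 hμ1 h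
    rw [abs_sub_comm, abs_sub_comm b a]
    exact this
end

section
/- Let f : ℝ^d → ℝ₊ be an integrable log-concave function with 0 < ∫f < ∞. Then f(0) ≥ e^{−d} · sup_{x ∈ ℝ^d} f(x), provided the barycenter of f is at the origin (∫ x f(x) dx = 0). -/
open MeasureTheory Set Filter Topology

lemma fradelizi_helper_le {a b C : ℝ}
    (h : ∀ t : ℝ, t ∈ Set.Ioo (0:ℝ) 1 → a * t + b ≤ C) : b ≤ C := by
  have T : Tendsto (fun t : ℝ => a * t + b) (𝓝[>] (0:ℝ)) (𝓝 b) := by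
    have h2 : Tendsto (fun t : ℝ => a * t + b) (𝓝 (0:ℝ)) (𝓝 (a * 0 + b)) :=
      ((continuous_const.mul continuous_id).add continuous_const).tendsto 0
    simpa using h2.mono_left nhdsWithin_le_nhds
  exact le_of_tendsto T (Filter.mem_of_superset
    (Ioo_mem_nhdsGT_of_mem ⟨le_refl _, zero_lt_one⟩) h)

lemma fradelizi_convexD {d : ℕ} {f : (Fin d → ℝ) → ℝ}
    (hlc : ∀ x y : Fin d → ℝ, ∀ t : ℝ, 0 ≤ t → t ≤ 1 →
      f x ^ t * f y ^ (1 - t) ≤ f (t • x + (1 - t) • y)) :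
    Convex ℝ {x | 0 < f x} := by
  intro x hx y hy a b ha hb hab
  rcases eq_or_lt_of_le ha with rfl | ha'
  · have hb1 : b = 1 := by linarith
    simpa [hb1] using hy
  rcases eq_or_lt_of_le hb with rfl | hb'
  · have ha1 : a = 1 := by linarith
    simpa [ha1] using hx
  have h := hlc x y a ha ( by linarith)
  have hb' : b = 1 - a := by linarith
  subst hb'
  refine lt_of_lt_of_le ?_ h
  exact mul_pos (Real.rpow_pos_of_pos hx _) (Real.rpow_pos_of_pos hy _)

lemma fradelizi_zero_mem_interior {d : ℕ} {f : (Fin d → ℝ) → ℝ}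
    (hnn : ∀ x, 0 ≤ f x)
    (hlc : ∀ x y : Fin d → ℝ, ∀ t : ℝ, 0 ≤ t → t ≤ 1 →
      f x ^ t * f y ^ (1 - t) ≤ f (t • x + (1 - t) • y))
    (hint : Integrable f)
    (hpos : 0 < ∫ x, f x)
    (hbar_int : ∀ i, Integrable (fun x => x i * f x))
    (hbar : ∀ i, (∫ x, x i * f x) = 0) :
    (0 : Fin d → ℝ) ∈ interior {x | 0 < f x} := by
  set D := {x : Fin d → ℝ | 0 < f x} with hDdef
  have hDconv : Convex ℝ D := fradelizi_convexD hlc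
  by_contra h0
  have hfae : ∀ᵐ x, f x = 0 := by
    rcases Set.eq_empty_or_nonempty (interior D) with hi | hi
    · -- interior empty: D is null
      have hfr : volume (frontier D) = 0 := hDconv.addHaar_frontier volume
      have hDnull : volume D = 0 := by
        refine measure_mono_null (fun x hx => ?_) hfr
        exact ⟨subset_closure hx, by simp [hi]⟩
      rw [ae_iff]
      refine measure_mono_null (fun x hx => ?_) hDnull
      exact lt_of_le_of_ne (hnn x) (Ne.symm hx)
    · -- separate 0 from interior D
      obtain ⟨ℓ, hℓ⟩ := geometric_hahn_banach_open_point
        (hDconv.interior) isOpen_interior h0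
      obtain ⟨x0, hx0⟩ := hi
      have hℓ0 : ℓ (0 : Fin d → ℝ) = 0 := map_zero ℓ
      have hℓneg : ∀ x ∈ D, ℓ x ≤ 0 := by
        intro x hx
        have key : ∀ t : ℝ, t ∈ Set.Ioo (0:ℝ) 1 →
            (ℓ x0 - ℓ x) * t + ℓ x ≤ 0 := by
          intro t ht
          have hmem : t • x0 + (1 - t) • x ∈ interior D :=
            hDconv.combo_interior_self_mem_interior hx0 hx ht.1
              (by linarith [ht.2]) (by ring)
          have := hℓ _ hmem
          rw [hℓ0] at this
          have h2 : ℓ (t • x0 + (1 - t) • x) = t * ℓ x0 + (1 - t) * ℓ x := by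
            simp [map_add, _root_.map_smul, smul_eq_mul]
          rw [h2] at this
          nlinarith [this]
        exact fradelizi_helper_le key
      have hℓne : ℓ x0 < 0 := by
        have := hℓ x0 hx0; rwa [hℓ0] at this
      -- kernel is null
      have hker : volume {x : Fin d → ℝ | ℓ x = 0} = 0 := by
        have : (LinearMap.ker (ℓ : (Fin d → ℝ) →ₗ[ℝ] ℝ) : Submodule ℝ (Fin d → ℝ)) ≠ ⊤ := by
          intro htop
          have : ℓ x0 = 0 := by
            have hx0mem : x0 ∈ LinearMap.ker (ℓ : (Fin d → ℝ) →ₗ[ℝ] ℝ) := by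
              rw [htop]; trivial
            simpa using hx0mem
          exact absurd this (ne_of_lt hℓne)
        rw [show {x : Fin d → ℝ | ℓ x = 0} = (LinearMap.ker (ℓ : (Fin d → ℝ) →ₗ[ℝ] ℝ) : Set (Fin d → ℝ)) by ext x; simp]
        exact Measure.addHaar_submodule volume _ this
      -- the nonnegative function (-ℓ x) * f x has integral zero
      set φ : (Fin d → ℝ) → ℝ := fun x => (-ℓ x) * f x with hφdef
      have hℓexp : ∀ x : Fin d → ℝ, ℓ x = ∑ i, x i • ℓ (fun j => if i = j then 1 else 0) :=
        fun x => LinearMap.pi_apply_eq_sum_univ (ℓ : (Fin d → ℝ) →ₗ[ℝ] ℝ) x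
      have hφeq : φ = fun x => ∑ i, (-(ℓ (fun j => if i = j then 1 else 0))) * (x i * f x) := by
        funext x
        rw [hφdef]
        simp only [hℓexp x, smul_eq_mul]
        rw [neg_mul, Finset.sum_mul, ← Finset.sum_neg_distrib]
        · congr 1; funext i; ring
      have hφint : Integrable φ := by
        rw [hφeq]
        exact integrable_finset_sum _ (fun i _ => (hbar_int i).const_mul _)
      have hφzero : ∫ x, φ x = 0 := by
        rw [hφeq]
        rw [integral_finset_sum _ (fun i _ => (hbar_int i).const_mul _)]
        simp only [neg_mul, integral_neg, integral_const_mul]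
        simp [hbar]
      have hφnn : ∀ x, 0 ≤ φ x := by
        intro x
        rcases lt_or_ge 0 (f x) with hx | hx
        · exact mul_nonneg (by linarith [hℓneg x hx]) (hnn x)
        · have : f x = 0 := le_antisymm hx (hnn x)
          simp [hφdef, this]
      have hφae : φ =ᵐ[volume] 0 :=
        (integral_eq_zero_iff_of_nonneg hφnn hφint).mp hφzero
      have hkae : ∀ᵐ x : Fin d → ℝ, ℓ x ≠ 0 := by
        rw [ae_iff]; simpa using hker
      filter_upwards [hφae, hkae] with x h1 h2
      rcases lt_or_ge 0 (f x) with hx | hx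
      · have hlt : ℓ x < 0 := lt_of_le_of_ne (hℓneg x hx) h2
        have : (-ℓ x) * f x = 0 := h1
        nlinarith
      · exact le_antisymm hx (hnn x)
  have : ∫ x, f x = 0 := by
    rw [integral_congr_ae hfae]; simp
  exact absurd hpos (by rw [this]; exact lt_irrefl 0)

/-- `-log f` is convex on `{f > 0}`. -/
lemma fradelizi_convexOnW {d : ℕ} {f : (Fin d → ℝ) → ℝ}
    (hlc : ∀ x y : Fin d → ℝ, ∀ t : ℝ, 0 ≤ t → t ≤ 1 →
      f x ^ t * f y ^ (1 - t) ≤ f (t • x + (1 - t) • y)) :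
    ConvexOn ℝ {x | 0 < f x} (fun x => -Real.log (f x)) := by
  refine ⟨fradelizi_convexD hlc, ?_⟩
  intro x hx y hy a b ha hb hab
  rcases eq_or_lt_of_le ha with rfl | ha'
  · have hb1 : b = 1 := by linarith
    simp [hb1]
  rcases eq_or_lt_of_le hb with rfl | hb'
  · have ha1 : a = 1 := by linarith
    simp [ha1]
  have hb2 : b = 1 - a := by linarith
  subst hb2
  have h := hlc x y a ha (by linarith)
  have hprod : (0:ℝ) < f x ^ a * f y ^ (1 - a) :=
    mul_pos (Real.rpow_pos_of_pos hx _) (Real.rpow_pos_of_pos hy _)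
  have hlog := Real.log_le_log hprod h
  rw [Real.log_mul (ne_of_gt (Real.rpow_pos_of_pos hx _))
      (ne_of_gt (Real.rpow_pos_of_pos hy _)),
    Real.log_rpow hx, Real.log_rpow hy] at hlog
  have : -Real.log (f (a • x + (1-a) • y)) ≤ -(a * Real.log (f x) + (1-a) * Real.log (f y)) :=
    neg_le_neg hlog
  calc -Real.log (f (a • x + (1-a) • y))
      ≤ -(a * Real.log (f x) + (1-a) * Real.log (f y)) := this
    _ = a • (-Real.log (f x)) + (1-a) • (-Real.log (f y)) := by
        simp [smul_eq_mul]; ring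

/-- Approximate subgradient bound. -/
lemma fradelizi_affine_bound {d : ℕ} {f : (Fin d → ℝ) → ℝ}
    (hnn : ∀ x, 0 ≤ f x)
    (hlc : ∀ x y : Fin d → ℝ, ∀ t : ℝ, 0 ≤ t → t ≤ 1 →
      f x ^ t * f y ^ (1 - t) ≤ f (t • x + (1 - t) • y))
    (h0int : (0 : Fin d → ℝ) ∈ interior {x | 0 < f x})
    {ε : ℝ} (hε : 0 < ε) :
    ∃ g : Fin d → ℝ, ∀ x, f x ≤ f 0 * Real.exp (ε - ∑ i, g i * x i) := by
  set D := {x : Fin d → ℝ | 0 < f x} with hDdef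
  have hDconv : Convex ℝ D := fradelizi_convexD hlc
  have hf0D : (0 : Fin d → ℝ) ∈ D := interior_subset h0int
  have hf0 : 0 < f 0 := hf0D
  set W : (Fin d → ℝ) → ℝ := fun x => -Real.log (f x) with hWdef
  have hWconv : ConvexOn ℝ D W := fradelizi_convexOnW hlc
  have hWconvInt : ConvexOn ℝ (interior D) W :=
    hWconv.subset interior_subset (hDconv.interior)
  have hWcont : ContinuousOn W (interior D) :=
    ConvexOn.continuousOn isOpen_interior hWconvInt
  -- the epigraph over the interior and its interior
  set Epi : Set ((Fin d → ℝ) × ℝ) := {p | p.1 ∈ interior D ∧ W p.1 ≤ p.2} with hEpidef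
  have hEpiConv : Convex ℝ Epi := hWconvInt.convex_epigraph
  set O : Set ((Fin d → ℝ) × ℝ) := interior Epi with hOdef
  have hOconv : Convex ℝ O := hEpiConv.interior
  -- membership of strict epigraph points in O
  have hmemO : ∀ x : Fin d → ℝ, x ∈ interior D → ∀ δ : ℝ, 0 < δ → (x, W x + δ) ∈ O := by
    intro x hx δ hδ
    have hca : ContinuousAt W x :=
      hWcont.continuousAt (isOpen_interior.mem_nhds hx)
    have hnear : {y | W y < W x + δ/2} ∈ 𝓝 x := by
      have := hca (Iio_mem_nhds (show W x < W x + δ/2 by linarith))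
      simpa [Set.preimage] using this
    obtain ⟨U, hUsub, hUopen, hxU⟩ := mem_nhds_iff.mp (Filter.inter_mem hnear
      (isOpen_interior.mem_nhds hx))
    refine mem_interior.mpr ⟨U ×ˢ Set.Ioi (W x + δ/2), ?_, hUopen.prod isOpen_Ioi, ?_⟩
    · rintro ⟨y, r⟩ ⟨hyU, hr⟩
      rcases hUsub hyU with ⟨hy1, hy2⟩
      exact ⟨hy2, le_of_lt (lt_trans hy1 hr)⟩
    · exact ⟨hxU, by simp; linarith⟩
  -- the point to separate
  have hpnot : ((0 : Fin d → ℝ), W 0 - ε) ∉ O := by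
    intro hp
    have : W 0 ≤ W 0 - ε := (interior_subset hp).2
    linarith
  obtain ⟨φ, hφ⟩ := geometric_hahn_banach_open_point hOconv isOpen_interior hpnot
  set c : ℝ := φ ((0 : Fin d → ℝ), (1 : ℝ)) with hcdef
  have hsplit : ∀ (x : Fin d → ℝ) (r : ℝ), φ (x, r) = φ (x, 0) + r * c := by
    intro x r
    have : ((x, r) : (Fin d → ℝ) × ℝ) = (x, (0:ℝ)) + r • ((0 : Fin d → ℝ), (1:ℝ)) := by
      simp [Prod.ext_iff]
    rw [this, map_add, _root_.map_smul, smul_eq_mul]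
  have hφp : φ ((0 : Fin d → ℝ), W 0 - ε) = (W 0 - ε) * c := by
    rw [hsplit]; simp; exact map_zero φ
  have hφ00 : φ ((0 : Fin d → ℝ), (0:ℝ)) = 0 := by
    have : ((0 : Fin d → ℝ), (0:ℝ)) = (0 : (Fin d → ℝ) × ℝ) := rfl
    rw [this, map_zero]
  have hc : c < 0 := by
    have h1 := hφ _ (hmemO 0 h0int 1 one_pos)
    rw [hsplit, hφp, hφ00] at h1
    nlinarith [h1, hε]
  -- key inequality on the interior
  have hkey : ∀ x ∈ interior D, φ (x, 0) + c * W x ≤ (W 0 - ε) * c := by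
    intro x hx
    refine fradelizi_helper_le (a := c) ?_
    intro t ht
    have h1 := hφ _ (hmemO x hx t ht.1)
    rw [hsplit, hφp] at h1
    nlinarith [h1]
  -- extend to all of D
  have hkeyD : ∀ x ∈ D, φ (x, 0) + c * W x ≤ (W 0 - ε) * c := by
    intro x hx
    refine fradelizi_helper_le
      (a := -(φ (x,0) + c * W x) + c * W 0) ?_
    intro t ht
    have hmem : t • (0 : Fin d → ℝ) + (1 - t) • x ∈ interior D :=
      hDconv.combo_interior_self_mem_interior h0int hx ht.1 (by linarith [ht.2]) (by ring)
    have h1 := hkey _ hmem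
    have h2 : W (t • (0 : Fin d → ℝ) + (1 - t) • x) ≤ t * W 0 + (1 - t) * W x :=
      hWconv.2 (interior_subset h0int) hx ht.1.le (by linarith [ht.2]) (by ring)
    have h3 : φ ((t • (0 : Fin d → ℝ) + (1 - t) • x), 0) = (1 - t) * φ (x, 0) := by
      have : ((t • (0 : Fin d → ℝ) + (1 - t) • x), (0:ℝ))
          = (1 - t) • ((x, (0:ℝ)) : (Fin d → ℝ) × ℝ) := by
        simp [Prod.ext_iff, Prod.smul_def, smul_eq_mul]
      rw [this, _root_.map_smul, smul_eq_mul]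
    have h4 : c * W (t • (0 : Fin d → ℝ) + (1 - t) • x) ≥ c * (t * W 0 + (1 - t) * W x) :=
      mul_le_mul_of_nonpos_left h2 hc.le
    nlinarith [h1]
  -- define the linear coefficients
  set g : Fin d → ℝ := fun i => -(φ ((fun j => if i = j then (1:ℝ) else 0), 0)) / c with hgdef
  refine ⟨g, fun x => ?_⟩
  have hψ : ∀ x : Fin d → ℝ,
      φ (x, (0:ℝ)) = ∑ i, x i * φ ((fun j => if i = j then (1:ℝ) else 0), 0) := by
    intro x
    have hx2 : ((x, (0:ℝ)) : (Fin d → ℝ) × ℝ)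
        = ∑ i, x i • ((((fun j => if i = j then (1:ℝ) else 0) : Fin d → ℝ), (0:ℝ)) :
            (Fin d → ℝ) × ℝ) := by
      rw [Prod.ext_iff]
      constructor
      · rw [Prod.fst_sum]
        simp only [Prod.smul_mk, Prod.mk.injEq]
        exact pi_eq_sum_univ x
      · rw [Prod.snd_sum]
        simp
    rw [hx2, map_sum]
    refine Finset.sum_congr rfl fun i _ => ?_
    rw [_root_.map_smul, smul_eq_mul]
  have hqsum : ∀ x : Fin d → ℝ, ∑ i, g i * x i = -(φ (x, (0:ℝ))) / c := by
    intro x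
    have h5 : ∀ i : Fin d, g i * x i
        = -(x i * φ ((fun j => if i = j then (1:ℝ) else 0), 0)) / c := by
      intro i
      rw [hgdef]
      ring
    rw [Finset.sum_congr rfl (fun i _ => h5 i), ← Finset.sum_div,
      Finset.sum_neg_distrib, ← hψ]
  rcases lt_or_ge 0 (f x) with hfx | hfx
  · -- x ∈ D
    have h1 := hkeyD x hfx
    have h2 : W 0 - ε + ∑ i, g i * x i ≤ W x := by
      rw [hqsum x]
      have heq : W 0 - ε + -φ (x, (0:ℝ)) / c = ((W 0 - ε) * c - φ (x, (0:ℝ))) / c := by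
        rw [eq_div_iff (ne_of_lt hc), add_mul, div_mul_cancel₀ _ (ne_of_lt hc)]
        ring
      rw [heq, div_le_iff_of_neg hc]
      linarith [h1]
    have h3 : Real.log (f x) ≤ Real.log (f 0) + (ε - ∑ i, g i * x i) := by
      have hWx : W x = -Real.log (f x) := rfl
      have hW0 : W 0 = -Real.log (f 0) := rfl
      rw [hWx, hW0] at h2
      linarith
    calc f x = Real.exp (Real.log (f x)) := (Real.exp_log hfx).symm
      _ ≤ Real.exp (Real.log (f 0) + (ε - ∑ i, g i * x i)) := Real.exp_le_exp.mpr h3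
      _ = f 0 * Real.exp (ε - ∑ i, g i * x i) := by
          rw [Real.exp_add, Real.exp_log hf0]
  · have hfx0 : f x = 0 := le_antisymm hfx (hnn x)
    rw [hfx0]
    exact le_of_lt (mul_pos hf0 (Real.exp_pos _))

section Fradelizi

variable {d : ℕ} {f : (Fin d → ℝ) → ℝ}

-- core step: the scaling inequality for fixed s ∈ (0,1), given the affine bound
lemma fradelizi_core
    (hnn : ∀ x, 0 ≤ f x)
    (hlc : ∀ x y : Fin d → ℝ, ∀ t : ℝ, 0 ≤ t → t ≤ 1 →
      f x ^ t * f y ^ (1 - t) ≤ f (t • x + (1 - t) • y))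
    (hint : Integrable f)
    (hpos : 0 < ∫ x, f x)
    (hbar_int : ∀ i, Integrable (fun x => x i * f x))
    (hbar : ∀ i, (∫ x, x i * f x) = 0)
    (hf0 : 0 < f 0)
    {ε : ℝ} (hε : 0 < ε) {g : Fin d → ℝ}
    (hg : ∀ x, f x ≤ f 0 * Real.exp (ε - ∑ i, g i * x i))
    {m : Fin d → ℝ} (hm : 0 < f m)
    {s : ℝ} (hs : s ∈ Set.Ioo (0:ℝ) 1) :
    f m ≤ (f 0 * Real.exp ε) * ((s ^ d)⁻¹) ^ ((1:ℝ)/(1 - s)) := by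
  obtain ⟨hs0, hs1⟩ := hs
  have h1s : (0:ℝ) < 1 - s := by linarith
  set F := ∫ x, f x with hF
  set c1 : Fin d → ℝ := (1 - s) • m with hc1
  -- integrability of the shifted-scaled function
  have h1 : Integrable (fun x => f (s • x + c1)) :=
    (hint.comp_add_right c1).comp_smul (ne_of_gt hs0)
  have hI1 : ∫ x, f (s • x + c1) = (s ^ d)⁻¹ * F := by
    have h2 := Measure.integral_comp_smul (volume) (fun y => f (y + c1)) s
    rw [integral_add_right_eq_self (μ := volume) f c1] at h2
    rw [Module.finrank_fin_fun] at h2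
    rw [h2, smul_eq_mul, abs_of_pos (by positivity)]
  -- pointwise log-concavity bound
  have hptlc : ∀ x, f x ^ s * f m ^ (1 - s) ≤ f (s • x + c1) :=
    fun x => hlc x m s hs0.le hs1.le
  have h2int : Integrable (fun x => f x ^ s * f m ^ (1 - s)) := by
    refine Integrable.mono' h1 ?_ ?_
    · exact (((Real.continuous_rpow_const hs0.le).measurable.comp_aemeasurable
        hint.aemeasurable).mul_const _).aestronglyMeasurable
    · filter_upwards with x
      rw [Real.norm_eq_abs, abs_of_nonneg (mul_nonneg (Real.rpow_nonneg (hnn x) _)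
        (Real.rpow_nonneg (hnn m) _))]
      exact hptlc x
  have hmono1 : ∫ x, f x ^ s * f m ^ (1 - s) ≤ ∫ x, f (s • x + c1) :=
    integral_mono h2int h1 hptlc
  have hmul : ∫ x, f x ^ s * f m ^ (1 - s) = (∫ x, f x ^ s) * f m ^ (1 - s) :=
    integral_mul_const _ _
  have hKm : (0:ℝ) < f m ^ (1 - s) := Real.rpow_pos_of_pos hm _
  have h3 : Integrable (fun x => f x ^ s) := by
    have := h2int.mul_const (f m ^ (1 - s))⁻¹
    simpa [mul_assoc, mul_inv_cancel₀ (ne_of_gt hKm)] using this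
  -- the lower bound function
  set B : ℝ := f 0 * Real.exp ε with hB
  have hBpos : (0:ℝ) < B := mul_pos hf0 (Real.exp_pos _)
  set c0 : ℝ := B ^ (s - 1) with hc0def
  have hc0 : (0:ℝ) < c0 := Real.rpow_pos_of_pos hBpos _
  set h : (Fin d → ℝ) → ℝ :=
    fun x => c0 * f x + (c0 * (1 - s)) * ∑ i, g i * (x i * f x) with hhdef
  have hpt : ∀ x, h x ≤ f x ^ s := by
    intro x
    have hqx : ∑ i, g i * (x i * f x) = (∑ i, g i * x i) * f x := by
      rw [Finset.sum_mul]
      exact Finset.sum_congr rfl fun i _ => by ring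
    rcases eq_or_lt_of_le (hnn x) with hx0 | hfx
    · rw [hhdef]
      simp only [← hx0]
      rw [Real.zero_rpow (ne_of_gt hs0)]
      simp
    set q : ℝ := ∑ i, g i * x i with hq
    have hub : f x ≤ B * Real.exp (-q) := by
      have := hg x
      rwa [sub_eq_add_neg, Real.exp_add, ← mul_assoc] at this
    have hsplit : f x ^ s = f x * f x ^ (s - 1) := by
      calc f x ^ s = f x ^ (1 + (s - 1)) := by norm_num
        _ = f x * f x ^ (s - 1) := by rw [Real.rpow_add hfx, Real.rpow_one]
    have hlow : (B * Real.exp (-q)) ^ (s - 1) ≤ f x ^ (s - 1) :=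
      Real.rpow_le_rpow_of_nonpos hfx hub (by linarith)
    have hBq : (B * Real.exp (-q)) ^ (s - 1) = c0 * Real.exp ((1 - s) * q) := by
      rw [Real.mul_rpow hBpos.le (Real.exp_pos _).le, hc0def]
      congr 1
      rw [← Real.exp_mul]
      congr 1
      ring
    have hexp : 1 + (1 - s) * q ≤ Real.exp ((1 - s) * q) := by
      have := Real.add_one_le_exp ((1 - s) * q)
      linarith
    have hchain : c0 * (1 + (1 - s) * q) ≤ f x ^ (s - 1) := by
      calc c0 * (1 + (1 - s) * q) ≤ c0 * Real.exp ((1 - s) * q) :=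
            mul_le_mul_of_nonneg_left hexp hc0.le
        _ = (B * Real.exp (-q)) ^ (s - 1) := hBq.symm
        _ ≤ f x ^ (s - 1) := hlow
    have : f x * (c0 * (1 + (1 - s) * q)) ≤ f x * f x ^ (s - 1) :=
      mul_le_mul_of_nonneg_left hchain hfx.le
    rw [← hsplit] at this
    refine le_trans (le_of_eq ?_) this
    rw [hhdef]
    simp only [hqx, ← hq]
    ring
  have hhint : Integrable h :=
    (hint.const_mul c0).add
      ((integrable_finset_sum _ (fun i _ => (hbar_int i).const_mul (g i))).const_mul _)
  have hhval : ∫ x, h x = c0 * F := by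
    rw [hhdef]
    rw [integral_add (hint.const_mul c0)
      ((integrable_finset_sum _ (fun i _ => (hbar_int i).const_mul (g i))).const_mul _)]
    rw [integral_const_mul, integral_const_mul,
      integral_finset_sum _ (fun i _ => (hbar_int i).const_mul (g i))]
    simp only [integral_const_mul, hbar, mul_zero, Finset.sum_const_zero]
    rw [← hF]
    ring
  have h4 : c0 * F ≤ ∫ x, f x ^ s := hhval ▸ integral_mono hhint h3 hpt
  -- combine
  have h5 : c0 * f m ^ (1 - s) ≤ (s ^ d)⁻¹ := by
    have h6 : (c0 * f m ^ (1 - s)) * F ≤ (s ^ d)⁻¹ * F := by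
      calc (c0 * f m ^ (1 - s)) * F = (c0 * F) * f m ^ (1 - s) := by ring
        _ ≤ (∫ x, f x ^ s) * f m ^ (1 - s) := mul_le_mul_of_nonneg_right h4 hKm.le
        _ = ∫ x, f x ^ s * f m ^ (1 - s) := hmul.symm
        _ ≤ ∫ x, f (s • x + c1) := hmono1
        _ = (s ^ d)⁻¹ * F := hI1
    exact le_of_mul_le_mul_right h6 hpos
  -- raise to the power 1/(1-s)
  have h7 := Real.rpow_le_rpow (mul_pos hc0 hKm).le h5 (le_of_lt (by positivity : (0:ℝ) < 1/(1-s)))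
  have hL : (c0 * f m ^ (1 - s)) ^ ((1:ℝ)/(1 - s)) = B⁻¹ * f m := by
    rw [Real.mul_rpow hc0.le hKm.le]
    congr 1
    · rw [hc0def, ← Real.rpow_mul hBpos.le]
      have hexp : (s - 1) * (1/(1 - s)) = -1 := by
        field_simp
        ring
      rw [hexp, Real.rpow_neg_one]
    · rw [← Real.rpow_mul (hnn m)]
      rw [mul_one_div, div_self (ne_of_gt h1s), Real.rpow_one]
  rw [hL] at h7
  calc f m = B * (B⁻¹ * f m) := by field_simp
    _ ≤ B * ((s ^ d)⁻¹) ^ ((1:ℝ)/(1 - s)) := mul_le_mul_of_nonneg_left h7 hBpos.le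
end Fradelizi


open MeasureTheory

/-- For a centered integrable log-concave function `f : ℝ^d → ℝ₊` with positive
integral, `f(0) ≥ e^{-d} sup f` (Fradelizi's inequality). -/
theorem stmt_8 (d : ℕ) (f : (Fin d → ℝ) → ℝ)
    (hnn : ∀ x, 0 ≤ f x)
    (hlc : ∀ x y : Fin d → ℝ, ∀ t : ℝ, 0 ≤ t → t ≤ 1 →
      f x ^ t * f y ^ (1 - t) ≤ f (t • x + (1 - t) • y))
    (hint : Integrable f)
    (hpos : 0 < ∫ x, f x)
    (hbar_int : ∀ i, Integrable (fun x => x i * f x))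
    (hbar : ∀ i, (∫ x, x i * f x) = 0) :
    Real.exp (-(d : ℝ)) * (⨆ x : Fin d → ℝ, f x) ≤ f 0 := by
  have h0int := fradelizi_zero_mem_interior hnn hlc hint hpos hbar_int hbar
  have hf0D : (0 : Fin d → ℝ) ∈ {x | 0 < f x} := interior_subset h0int
  have hf0 : 0 < f 0 := hf0D
  have hmain : ∀ m : Fin d → ℝ, f m ≤ f 0 * Real.exp (d : ℝ) := by
    intro m
    rcases le_or_gt (f m) 0 with hm | hm
    · exact le_trans hm (le_of_lt (mul_pos hf0 (Real.exp_pos _)))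
    have hstepε : ∀ ε : ℝ, 0 < ε → f m ≤ (f 0 * Real.exp ε) * Real.exp (d : ℝ) := by
      intro ε hε
      obtain ⟨g, hg⟩ := fradelizi_affine_bound hnn hlc h0int hε
      set B : ℝ := f 0 * Real.exp ε with hBdef
      have hBpos : (0:ℝ) < B := mul_pos hf0 (Real.exp_pos _)
      have hstep : ∀ s : ℝ, s ∈ Set.Ioo (0:ℝ) 1 →
          f m ≤ B * ((s ^ d)⁻¹) ^ ((1:ℝ)/(1 - s)) := by
        intro s hs
        exact fradelizi_core hnn hlc hint hpos hbar_int hbar hf0 hε hg hm hs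
      -- tendsto of the bound as s → 1⁻
      have Tl : Filter.Tendsto (fun s : ℝ => Real.log s / (s - 1)) (nhdsWithin 1 (Set.Iio 1))
          (nhds 1) := by
        have hd : HasDerivAt Real.log 1 1 := by
          simpa using Real.hasDerivAt_log one_ne_zero
        have := hasDerivAt_iff_tendsto_slope.mp hd
        have hmono : nhdsWithin (1:ℝ) (Set.Iio 1) ≤ nhdsWithin (1:ℝ) {(1:ℝ)}ᶜ :=
          nhdsWithin_mono _ (fun x hx => ne_of_lt hx)
        have h2 := this.mono_left hmono
        refine h2.congr (fun s => ?_)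
        simp [slope_def_field, Real.log_one]
      have Texp : Filter.Tendsto
          (fun s : ℝ => B * Real.exp ((d : ℝ) * (Real.log s / (s - 1))))
          (nhdsWithin 1 (Set.Iio 1)) (nhds (B * Real.exp (d : ℝ))) := by
        have h1 : Filter.Tendsto (fun s : ℝ => (d : ℝ) * (Real.log s / (s - 1)))
            (nhdsWithin 1 (Set.Iio 1)) (nhds ((d : ℝ) * 1)) := Tl.const_mul _
        have h2 := (Real.continuous_exp.tendsto _).comp h1
        rw [mul_one] at h2
        exact h2.const_mul B
      have hcongr : ∀ s : ℝ, s ∈ Set.Ioo (0:ℝ) 1 →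
          B * Real.exp ((d : ℝ) * (Real.log s / (s - 1)))
            = B * ((s ^ d)⁻¹) ^ ((1:ℝ)/(1 - s)) := by
        intro s hs
        have hs1 : s - 1 ≠ 0 := by
          intro hc
          have : s = 1 := by linarith
          exact absurd this (ne_of_lt hs.2)
        have h1s' : (1:ℝ) - s ≠ 0 := by
          intro hc
          apply hs1
          linarith
        have hsd : (0:ℝ) < (s ^ d)⁻¹ := inv_pos.mpr (pow_pos hs.1 d)
        rw [Real.rpow_def_of_pos hsd]
        congr 1
        rw [Real.log_inv, Real.log_pow]
        congr 1
        rw [show s - 1 = -(1 - s) by ring, div_neg]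
        ring
      have T : Filter.Tendsto (fun s : ℝ => B * ((s ^ d)⁻¹) ^ ((1:ℝ)/(1 - s)))
          (nhdsWithin 1 (Set.Iio 1)) (nhds (B * Real.exp (d : ℝ))) := by
        refine Texp.congr' ?_
        refine Filter.eventuallyEq_of_mem
          (Ioo_mem_nhdsLT_of_mem ⟨zero_lt_one, le_refl (1:ℝ)⟩) ?_
        intro s hs
        exact hcongr s hs
      exact ge_of_tendsto T (Filter.mem_of_superset
        (Ioo_mem_nhdsLT_of_mem ⟨zero_lt_one, le_refl (1:ℝ)⟩) hstep)
    have T2 : Filter.Tendsto (fun ε : ℝ => (f 0 * Real.exp ε) * Real.exp (d : ℝ))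
        (nhdsWithin 0 (Set.Ioi 0)) (nhds (f 0 * Real.exp (d : ℝ))) := by
      have h1 : Filter.Tendsto (fun ε : ℝ => (f 0 * Real.exp ε) * Real.exp (d : ℝ))
          (nhds 0) (nhds ((f 0 * Real.exp 0) * Real.exp (d : ℝ))) := by
        exact ((continuous_const.mul Real.continuous_exp).mul continuous_const).tendsto 0
      simpa using h1.mono_left nhdsWithin_le_nhds
    exact ge_of_tendsto T2 (Filter.mem_of_superset self_mem_nhdsWithin
      (fun ε hε => hstepε ε hε))
  have hsup : (⨆ x : Fin d → ℝ, f x) ≤ f 0 * Real.exp (d : ℝ) := ciSup_le hmain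
  calc Real.exp (-(d : ℝ)) * (⨆ x : Fin d → ℝ, f x)
      ≤ Real.exp (-(d : ℝ)) * (f 0 * Real.exp (d : ℝ)) :=
        mul_le_mul_of_nonneg_left hsup (Real.exp_nonneg _)
    _ = f 0 := by
        rw [Real.exp_neg]
        field_simp
end

section
/- Let K be a convex body in ℝ^d of volume 1 with barycenter at the origin. Then the circumradius satisfies R(K) ≤ (d+1) · λ_max(Cov(K))^{1/2}, where Cov(K)_{ij} = ∫_K x_i x_j dx and λ_max denotes the largest eigenvalue. -/
open MeasureTheory Set Pointwise

lemma aux_cone {d : ℕ} {K : Set (EuclideanSpace ℝ (Fin d))}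
    (hK : Convex ℝ K) {x u : EuclideanSpace ℝ (Fin d)} (hx : x ∈ K)
    {b s t : ℝ} (hb : (inner ℝ x u : ℝ) = b)
    (hst : s ≤ t) (htb : t ≤ b) (hsb : s < b) :
    ENNReal.ofReal (((b - t)/(b - s))^d) * volume (K ∩ {y | s ≤ (inner ℝ y u : ℝ)})
      ≤ volume (K ∩ {y | t ≤ (inner ℝ y u : ℝ)}) := by
  set l : ℝ := (t - s)/(b - s) with hl
  have hbs : (0:ℝ) < b - s := by linarith
  have hl0 : 0 ≤ l := div_nonneg (by linarith) hbs.le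
  have hl1 : l ≤ 1 := by
    rw [hl, div_le_one hbs]; linarith
  have h1l : 1 - l = (b - t)/(b - s) := by
    rw [hl]; field_simp; ring
  set A := K ∩ {y | s ≤ (inner ℝ y u : ℝ)} with hA
  have himg : (fun y => l • x + (1 - l) • y) '' A ⊆ K ∩ {y | t ≤ (inner ℝ y u : ℝ)} := by
    rintro _ ⟨y, ⟨hyK, hys⟩, rfl⟩
    constructor
    · exact hK hx hyK hl0 (by linarith) (by ring)
    · show t ≤ (inner ℝ (l • x + (1 - l) • y) u : ℝ)
      rw [inner_add_left, real_inner_smul_left, real_inner_smul_left, hb]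
      have h2 : (1 - l) * s ≤ (1 - l) * (inner ℝ y u : ℝ) :=
        mul_le_mul_of_nonneg_left hys (by linarith)
      have h3 : l * b + (1 - l) * s = t := by
        rw [hl]; field_simp; ring
      linarith
  have himg2 : (fun y => l • x + (1 - l) • y) '' A = (fun z => l • x + z) '' ((1 - l) • A) := by
    rw [← Set.image_smul, Set.image_image]
  have hvol : volume ((fun y => l • x + (1 - l) • y) '' A)
      = ENNReal.ofReal ((1 - l) ^ d) * volume A := by
    rw [himg2, Set.image_add_left, measure_preimage_add,
      Measure.addHaar_smul_of_nonneg volume (by linarith) A, finrank_euclideanSpace_fin]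
  calc ENNReal.ofReal (((b - t)/(b - s))^d) * volume A
      = volume ((fun y => l • x + (1 - l) • y) '' A) := by rw [hvol, h1l]
    _ ≤ volume (K ∩ {y | t ≤ (inner ℝ y u : ℝ)}) := measure_mono himg

lemma aux_polyint {d : ℕ} (hd : 1 ≤ d) (b : ℝ) :
    ∫ s in (-(b/d))..b, (s + b/(d*(d+2))) * (b - s)^d = 0 := by
  have hd0 : (d:ℝ) ≠ 0 := Nat.cast_ne_zero.2 (by omega)
  have hd1 : (d:ℝ) + 1 ≠ 0 := by positivity
  have hd2 : (d:ℝ) + 2 ≠ 0 := by positivity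
  set σ : ℝ := b/(d*(d+2)) with hσ
  set Q : ℝ → ℝ := fun s =>
    -((s + σ) * (b - s)^(d+1)) / (d+1) - (b - s)^(d+2) / ((d+1)*(d+2)) with hQ
  have hderiv : ∀ s ∈ Set.uIcc (-(b/d)) b, HasDerivAt Q ((s + σ) * (b - s)^d) s := by
    intro s _
    have h1 : HasDerivAt (fun s : ℝ => b - s) (-1) s := (hasDerivAt_id s).const_sub b
    have h2 : HasDerivAt (fun s : ℝ => (b - s)^(d+1))
        ((d+1 : ℕ) * (b - s)^d * (-1)) s := by
      simpa using h1.fun_pow (d+1)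
    have h4 : HasDerivAt (fun s : ℝ => (b - s)^(d+2))
        ((d+2 : ℕ) * (b - s)^(d+1) * (-1)) s := by
      simpa using h1.fun_pow (d+2)
    have h3 : HasDerivAt (fun s : ℝ => (s + σ) * (b - s)^(d+1))
        (1 * (b - s)^(d+1) + (s + σ) * ((d+1 : ℕ) * (b - s)^d * (-1))) s :=
      ((hasDerivAt_id s).add_const σ).mul h2
    have h5 := ((h3.neg.div_const ((d:ℝ)+1)).sub (h4.div_const (((d:ℝ)+1)*((d:ℝ)+2))))
    refine h5.congr_deriv ?_
    have hps : (b - s)^(d+1) = (b - s)^d * (b - s) := pow_succ _ _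
    push_cast
    rw [hps]
    field_simp
    ring
  have hcont : IntervalIntegrable (fun s => (s + σ) * (b - s)^d) volume (-(b/d)) b :=
    (Continuous.mul (by continuity) (by continuity)).intervalIntegrable _ _
  rw [intervalIntegral.integral_eq_sub_of_hasDerivAt hderiv hcont]
  have hQb : Q b = 0 := by
    simp [hQ, sub_self, zero_pow, Nat.succ_ne_zero]
  have hQm : Q (-(b/d)) = 0 := by
    have hL : b - (-(b/d)) = b*(d+1)/d := by field_simp; ring
    have h6 : Q (-(b/d)) = (b - (-(b/d)))^(d+1) *
        (-((-(b/d)) + σ)/(d+1) - (b - (-(b/d)))/((d+1)*(d+2))) := by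
      rw [hQ]; simp only []
      rw [pow_succ (b - (-(b/d))) (d+1)]
      ring
    rw [h6, hL]
    have h7 : -((-(b/d)) + σ)/((d:ℝ)+1) - (b*(d+1)/d)/(((d:ℝ)+1)*((d:ℝ)+2)) = 0 := by
      rw [hσ]; field_simp; ring
    rw [h7, mul_zero]
  rw [hQb, hQm, sub_zero]

set_option maxHeartbeats 1000000 in
/-- Circumradius bound: a centered convex body `K ⊂ ℝ^d` of volume 1 satisfies
`R(K) ≤ (d+1) λ_max(Cov K)^{1/2}`, where `λ_max(Cov K)` is the largest eigenvalue
of the matrix of second moments, i.e. the supremum over unit vectors `u` of the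
quadratic form `⟨Cov(K) u, u⟩ = ∫_K ⟨x,u⟩² dx`. -/
theorem stmt_14 (d : ℕ) (hd : 1 ≤ d)
    (K : Set (EuclideanSpace ℝ (Fin d)))
    (hKcomp : IsCompact K) (hKconv : Convex ℝ K) (hKint : (interior K).Nonempty)
    (hvol : volume K = 1)
    (hcenter : (∫ x in K, x) = 0) :
    ∀ x ∈ K, ‖x‖ ≤ ((d : ℝ) + 1) *
      Real.sqrt (sSup ((fun u : EuclideanSpace ℝ (Fin d) =>
        ∫ x in K, (inner ℝ x u : ℝ) ^ 2) '' {u | ‖u‖ = 1})) := by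
  intro x hx
  have hKmeas : MeasurableSet K := hKcomp.measurableSet
  haveI hfin : IsFiniteMeasure (volume.restrict K) := by
    constructor
    rw [Measure.restrict_apply_univ, hvol]
    exact ENNReal.one_lt_top
  have hvolK : (volume K).toReal = 1 := by rw [hvol]; rfl
  -- bounded above
  obtain ⟨R, hR⟩ := hKcomp.isBounded.subset_closedBall 0
  have hBdd : BddAbove ((fun u : EuclideanSpace ℝ (Fin d) =>
      ∫ x in K, (inner ℝ x u : ℝ) ^ 2) '' {u | ‖u‖ = 1}) := by
    refine ⟨R^2, ?_⟩
    rintro _ ⟨v, hv, rfl⟩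
    have hint : IntegrableOn (fun y => (inner ℝ y v : ℝ)^2) K volume :=
      (Continuous.pow (continuous_id.inner continuous_const) 2).continuousOn.integrableOn_compact
        hKcomp
    calc ∫ y in K, (inner ℝ y v : ℝ)^2
        ≤ ∫ y in K, R^2 := by
          refine setIntegral_mono_on hint (integrableOn_const ?_) hKmeas ?_
          · rw [hvol]; exact ENNReal.one_ne_top
          · intro y hy
            have h1 : |(inner ℝ y v : ℝ)| ≤ ‖y‖ * ‖v‖ := abs_real_inner_le_norm y v
            have h2 : ‖y‖ ≤ R := by
              have := hR hy
              simpa [Metric.mem_closedBall] using this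
            have h3 : ‖v‖ = 1 := hv
            have h4 : |(inner ℝ y v : ℝ)| ≤ R := by rw [h3, mul_one] at h1; linarith
            nlinarith [abs_nonneg ((inner ℝ y v : ℝ)), sq_abs ((inner ℝ y v : ℝ))]
        _ = R^2 := by
          rw [setIntegral_const, measureReal_def, hvolK]; simp
  by_cases hx0 : x = 0
  · subst hx0
    simp only [norm_zero]
    positivity
  -- setup
  set b : ℝ := ‖x‖ with hbdef
  have hb : 0 < b := norm_pos_iff.2 hx0
  set u : EuclideanSpace ℝ (Fin d) := b⁻¹ • x with hudef
  have hu : ‖u‖ = 1 := by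
    rw [hudef, norm_smul, norm_inv, Real.norm_eq_abs, abs_of_pos hb, ← hbdef]
    field_simp
  have hxu : (inner ℝ x u : ℝ) = b := by
    rw [hudef, real_inner_smul_right, real_inner_self_eq_norm_sq]
    field_simp
    ring
  have hcont_inner : Continuous fun y : EuclideanSpace ℝ (Fin d) => (inner ℝ y u : ℝ) :=
    continuous_id.inner continuous_const
  have hd0 : (0:ℝ) < d := by exact_mod_cast hd
  have hdne : (d:ℝ) ≠ 0 := ne_of_gt hd0
  have hd2ne : (d:ℝ)+2 ≠ 0 := by positivity
  set m : ℝ := -(b/d) with hmdef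
  set σ : ℝ := b/(d*(d+2)) with hσdef
  have hσ0 : 0 < σ := by positivity
  have hm0 : m < 0 := by rw [hmdef]; simp; positivity
  have hmσ : m < -σ := by
    rw [hmdef, hσdef, neg_lt_neg_iff]
    rw [div_lt_div_iff₀ (by positivity) hd0]
    nlinarith [mul_pos (mul_pos hb hd0) (by positivity : (0:ℝ) < (d:ℝ)+1)]
  have hσb : -σ < b := by nlinarith
  set F : ℝ → ℝ := fun s => (volume (K ∩ {y | s ≤ (inner ℝ y u : ℝ)})).toReal with hFdef
  have hFmeas_set : ∀ s : ℝ, MeasurableSet {y : EuclideanSpace ℝ (Fin d) | s ≤ (inner ℝ y u : ℝ)} :=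
    fun s => (isClosed_le continuous_const hcont_inner).measurableSet
  have hvol_ne_top : ∀ s : ℝ, volume (K ∩ {y | s ≤ (inner ℝ y u : ℝ)}) ≠ ⊤ := by
    intro s
    refine ne_top_of_le_ne_top ?_ (measure_mono Set.inter_subset_left)
    rw [hvol]; exact ENNReal.one_ne_top
  have hF01 : ∀ s, 0 ≤ F s ∧ F s ≤ 1 := by
    intro s
    constructor
    · exact ENNReal.toReal_nonneg
    · rw [hFdef]
      have hsub : volume (K ∩ {y | s ≤ (inner ℝ y u : ℝ)}) ≤ volume K :=
        measure_mono Set.inter_subset_left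
      calc (volume (K ∩ {y | s ≤ (inner ℝ y u : ℝ)})).toReal
          ≤ (volume K).toReal := ENNReal.toReal_mono (by rw [hvol]; exact ENNReal.one_ne_top) hsub
        _ = 1 := hvolK
  have hconeF : ∀ s t : ℝ, s ≤ t → t ≤ b → s < b →
      F s * ((b - t)/(b - s))^d ≤ F t := by
    intro s t hst htb hsb
    have h1 := aux_cone hKconv hx hxu hst htb hsb
    have h2 : (0:ℝ) ≤ ((b - t)/(b - s))^d :=
      pow_nonneg (div_nonneg (by linarith) (by linarith)) d
    calc F s * ((b - t)/(b - s))^d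
        = (ENNReal.ofReal (((b - t)/(b - s))^d)
            * volume (K ∩ {y | s ≤ (inner ℝ y u : ℝ)})).toReal := by
          rw [ENNReal.toReal_mul, ENNReal.toReal_ofReal h2, hFdef]; ring
      _ ≤ F t := ENNReal.toReal_mono (hvol_ne_top t) h1

  set G : ℝ → ℝ := fun t => (max m (min t b) + σ)^2 - (m + σ)^2 with hGdef
  have hGcont : Continuous G := by
    rw [hGdef]; fun_prop
  have claimA : ∀ t : ℝ, (-(2*σ))*t + b*σ + G t ≤ t^2 := by
    intro t
    rcases le_total t m with h | h
    · have h1 : min t b = t := min_eq_left (by linarith)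
      have h2 : max m t = m := max_eq_left h
      have hG : G t = 0 := by rw [hGdef]; simp only [h1, h2]; ring
      rw [hG]
      have hid : t^2 + 2*σ*t - b*σ = (t + b/d)*(t - b/(d+2)) := by
        rw [hσdef]; field_simp; ring
      have h3 : t + b/d ≤ 0 := by rw [hmdef] at h; linarith
      have h4 : t - b/(d+2) ≤ 0 := by
        have h5 : (0:ℝ) < b/(d+2) := by positivity
        nlinarith
      nlinarith [mul_nonneg (neg_nonneg.2 h3) (neg_nonneg.2 h4)]
    · rcases le_total t b with h' | h'
      · have h1 : max m (min t b) = t := by rw [min_eq_left h', max_eq_right h]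
        have hG : G t = (t + σ)^2 - (m + σ)^2 := by rw [hGdef]; simp only [h1]
        have heq : (-(2*σ))*t + b*σ + ((t + σ)^2 - (m + σ)^2) = t^2 := by
          rw [hmdef, hσdef]; field_simp; ring
        rw [hG]; linarith
      · have h1 : max m (min t b) = b := by rw [min_eq_right h', max_eq_right (by linarith)]
        have hG : G t = (b + σ)^2 - (m + σ)^2 := by rw [hGdef]; simp only [h1]
        have hmid : (-(2*σ))*b + b*σ + ((b + σ)^2 - (m + σ)^2) = b^2 := by
          rw [hmdef, hσdef]; field_simp; ring
        rw [hG]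
        nlinarith [mul_nonneg (by linarith : (0:ℝ) ≤ t - b)
          (by nlinarith : (0:ℝ) ≤ t + b + 2*σ)]
  -- Fubini step
  set ν := volume.restrict (Set.Ioc m b) with hν
  haveI hνfin : IsFiniteMeasure ν := by
    constructor
    rw [hν, Measure.restrict_apply_univ, Real.volume_Ioc]
    exact ENNReal.ofReal_lt_top
  set f : EuclideanSpace ℝ (Fin d) → ℝ → ℝ := fun y s =>
    Set.indicator (Set.Ioc m b) (fun s' => if s' ≤ (inner ℝ y u : ℝ) then 2*(s'+σ) else 0) s
    with hfdef
  have habs : ∀ s ∈ Set.Ioc m b, |2*(s+σ)| ≤ 2*(|m| + |b| + σ) := by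
    intro s hs
    rw [abs_le]
    constructor <;>
      nlinarith [neg_abs_le m, le_abs_self b, le_abs_self m, neg_abs_le b, hs.1, hs.2,
        abs_nonneg m, abs_nonneg b, hσ0.le]
  have hC : ∀ p : EuclideanSpace ℝ (Fin d) × ℝ,
      ‖Function.uncurry f p‖ ≤ 2*(|m| + |b| + σ) := by
    rintro ⟨y, s⟩
    simp only [Function.uncurry, hfdef, Set.indicator, Real.norm_eq_abs]
    split_ifs with h1 h2
    · exact habs s h1
    · simp only [abs_zero]; positivity
    · simp only [abs_zero]; positivity
  have huncurry : Function.uncurry f = fun q : EuclideanSpace ℝ (Fin d) × ℝ =>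
      Set.indicator {q : EuclideanSpace ℝ (Fin d) × ℝ |
        q.2 ∈ Set.Ioc m b ∧ q.2 ≤ (inner ℝ q.1 u : ℝ)} (fun q => 2*(q.2+σ)) q := by
    funext q
    rcases q with ⟨y, s⟩
    simp only [Function.uncurry, hfdef, Set.indicator, Set.mem_setOf_eq]
    split_ifs <;> tauto
  have hAmeas : MeasurableSet {q : EuclideanSpace ℝ (Fin d) × ℝ |
      q.2 ∈ Set.Ioc m b ∧ q.2 ≤ (inner ℝ q.1 u : ℝ)} := by
    have h1 : MeasurableSet {q : EuclideanSpace ℝ (Fin d) × ℝ | q.2 ∈ Set.Ioc m b} :=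
      measurable_snd measurableSet_Ioc
    have h2 : MeasurableSet {q : EuclideanSpace ℝ (Fin d) × ℝ | q.2 ≤ (inner ℝ q.1 u : ℝ)} :=
      (isClosed_le continuous_snd (hcont_inner.comp continuous_fst)).measurableSet
    exact h1.inter h2
  have hfsm : AEStronglyMeasurable (Function.uncurry f) ((volume.restrict K).prod ν) := by
    rw [huncurry]
    exact ((Measurable.indicator
      ((continuous_const.mul (continuous_snd.add continuous_const)).measurable) hAmeas)).aestronglyMeasurable
  have hfint : Integrable (Function.uncurry f) ((volume.restrict K).prod ν) :=
    Integrable.mono' (integrable_const (2*(|m| + |b| + σ))) hfsm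
      (Filter.Eventually.of_forall hC)
  have hinner : ∀ y : EuclideanSpace ℝ (Fin d), ∫ s, f y s ∂ν = G (inner ℝ y u : ℝ) := by
    intro y
    set c : ℝ := (inner ℝ y u : ℝ) with hc
    have e1 : ∫ s, f y s ∂ν
        = ∫ s in Set.Ioc m b, (fun s' => if s' ≤ c then 2*(s'+σ) else 0) s := by
      rw [hν, hfdef]
      rw [setIntegral_indicator measurableSet_Ioc, Set.inter_self]
    have e2 : (fun s' => if s' ≤ c then 2*(s'+σ) else 0)
        = Set.indicator (Set.Iic c) (fun s' => 2*(s'+σ)) := by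
      funext s'
      simp [Set.indicator, Set.mem_Iic]
    have e3 : ∫ s, f y s ∂ν = ∫ s in Set.Ioc m b ∩ Set.Iic c, 2*(s+σ) := by
      rw [e1, e2, setIntegral_indicator measurableSet_Iic]
    rw [e3, Set.Ioc_inter_Iic]
    by_cases hmc : m ≤ min b c
    · rw [← intervalIntegral.integral_of_le hmc]
      have hD : ∀ s ∈ Set.uIcc m (min b c),
          HasDerivAt (fun w : ℝ => (w+σ)^2) (2*(s+σ)) s := by
        intro s _
        have := ((hasDerivAt_id s).add_const σ).fun_pow 2
        simpa using this
      have hcont2 : Continuous fun s : ℝ => 2*(s+σ) :=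
        continuous_const.mul (continuous_id'.add continuous_const)
      rw [intervalIntegral.integral_eq_sub_of_hasDerivAt hD (hcont2.intervalIntegrable _ _)]
      have hmax : max m (min c b) = min b c := by
        rw [min_comm c b]
        exact max_eq_right hmc
      simp only [hGdef, hmax]
    · push_neg at hmc
      rw [Set.Ioc_eq_empty (by exact fun hcon => absurd hcon (not_lt.2 hmc.le))]
      rw [Measure.restrict_empty, integral_zero_measure]
      have hmax : max m (min c b) = m := by
        rw [min_comm c b]
        exact max_eq_left hmc.le
      simp only [hGdef, hmax]
      ring
  have houter : ∀ s ∈ Set.Ioc m b, (∫ y in K, f y s) = 2*(s+σ) * F s := by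
    intro s hs
    have e1 : (fun y => f y s) = fun y =>
        (2*(s+σ)) * Set.indicator {y : EuclideanSpace ℝ (Fin d) | s ≤ (inner ℝ y u : ℝ)}
          (fun _ => (1:ℝ)) y := by
      funext y
      simp only [hfdef, Set.indicator, Set.mem_setOf_eq, hs, if_true]
      split_ifs <;> simp
    rw [e1, integral_const_mul, setIntegral_indicator (hFmeas_set s), setIntegral_const]
    rw [hFdef]
    simp [smul_eq_mul, measureReal_def]
  have step1 : ∫ y in K, G (inner ℝ y u : ℝ) = ∫ s in Set.Ioc m b, 2*(s+σ) * F s := by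
    calc ∫ y in K, G (inner ℝ y u : ℝ)
        = ∫ y in K, ∫ s, f y s ∂ν := by
          refine integral_congr_ae (Filter.Eventually.of_forall fun y => ?_)
          exact (hinner y).symm
      _ = ∫ s, (∫ y in K, f y s) ∂ν := integral_integral_swap hfint
      _ = ∫ s in Set.Ioc m b, 2*(s+σ) * F s := by
          rw [hν]
          exact setIntegral_congr_fun measurableSet_Ioc houter
  -- comparison step
  set c₀ : ℝ := F (-σ) / (b + σ)^d with hc₀
  have hbσ : (0:ℝ) < b + σ := by linarith
  have hptwise : ∀ s ∈ Set.Ioc m b, 2*(s+σ) * (c₀ * (b - s)^d) ≤ 2*(s+σ) * F s := by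
    intro s hs
    rcases le_total s (-σ) with h | h
    · have hsltb : s < b := lt_of_le_of_lt h hσb
      have hbs : (0:ℝ) < b - s := by linarith
      have h1 := hconeF s (-σ) h (by linarith) hsltb
      rw [show b - (-σ) = b + σ by ring, div_pow] at h1
      have h1' : F s * (b + σ)^d ≤ F (-σ) * (b - s)^d := by
        calc F s * (b + σ)^d
            = (F s * ((b+σ)^d / (b-s)^d)) * (b-s)^d := by field_simp
          _ ≤ F (-σ) * (b-s)^d := mul_le_mul_of_nonneg_right h1 (by positivity)
      have h2 : F s ≤ c₀ * (b - s)^d := by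
        rw [hc₀, div_mul_eq_mul_div, le_div_iff₀ (by positivity : (0:ℝ) < (b+σ)^d)]
        linarith
      exact mul_le_mul_of_nonpos_left h2 (by nlinarith)
    · rcases eq_or_lt_of_le hs.2 with heq | hlt
      · have hz : (b - s)^d = 0 := by
          rw [heq, sub_self]
          exact zero_pow (by omega)
        have hz2 : c₀ * (b - s)^d = 0 := by rw [hz, mul_zero]
        rw [hz2, mul_zero]
        have h0 : (0:ℝ) ≤ 2*(s+σ) := by nlinarith
        exact mul_nonneg h0 (hF01 s).1
      · have h1 := hconeF (-σ) s h hlt.le hσb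
        rw [show b - (-σ) = b + σ by ring] at h1
        have h2 : c₀ * (b - s)^d ≤ F s := by
          calc c₀ * (b - s)^d = F (-σ) * ((b - s)/(b + σ))^d := by
                rw [hc₀, div_pow]; ring
            _ ≤ F s := h1
        exact mul_le_mul_of_nonneg_left h2 (by nlinarith)
  have hFmble : Measurable F := by
    have hFanti : Antitone F := by
      intro s t hst
      refine ENNReal.toReal_mono (hvol_ne_top s) (measure_mono ?_)
      rintro y ⟨hyK, hyt⟩
      exact ⟨hyK, le_trans hst hyt⟩
    exact hFanti.measurable
  have hint2 : IntegrableOn (fun s => 2*(s+σ) * F s) (Set.Ioc m b) volume := by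
    refine Integrable.mono' (integrable_const (2*(|m| + |b| + σ)))
      ((((measurable_id'.add_const σ).const_mul 2).mul hFmble).aestronglyMeasurable) ?_
    rw [ae_restrict_iff' measurableSet_Ioc]
    refine Filter.Eventually.of_forall fun s hs => ?_
    rw [Real.norm_eq_abs, abs_mul]
    calc |2*(s+σ)| * |F s| ≤ |2*(s+σ)| * 1 := by
          refine mul_le_mul_of_nonneg_left ?_ (abs_nonneg _)
          rw [abs_of_nonneg (hF01 s).1]
          exact (hF01 s).2
      _ ≤ 2*(|m| + |b| + σ) := by rw [mul_one]; exact habs s hs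
  have hint1 : IntegrableOn (fun s => 2*(s+σ) * (c₀ * (b - s)^d)) (Set.Ioc m b) volume := by
    have : Continuous fun s : ℝ => 2*(s+σ) * (c₀ * (b - s)^d) :=
      (continuous_const.mul (continuous_id'.add continuous_const)).mul
        (continuous_const.mul ((continuous_const.sub continuous_id').pow d))
    exact this.integrableOn_Ioc
  have hzero : ∫ s in Set.Ioc m b, 2*(s+σ) * (c₀ * (b - s)^d) = 0 := by
    have e1 : (fun s => 2*(s+σ) * (c₀ * (b - s)^d))
        = fun s => (2*c₀) * ((s + b/(d*(d+2))) * (b - s)^d) := by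
      funext s
      rw [hσdef]
      ring
    rw [e1, integral_const_mul]
    have hmb : m ≤ b := by linarith
    rw [← intervalIntegral.integral_of_le hmb, hmdef, aux_polyint hd b, mul_zero]
  have step2 : 0 ≤ ∫ s in Set.Ioc m b, 2*(s+σ) * F s := by
    rw [← hzero]
    exact setIntegral_mono_on hint1 hint2 measurableSet_Ioc hptwise
  -- assemble
  have hint_sq : IntegrableOn (fun y => (inner ℝ y u : ℝ)^2) K volume :=
    (Continuous.pow hcont_inner 2).continuousOn.integrableOn_compact hKcomp
  have hint_lin : IntegrableOn (fun y => (inner ℝ y u : ℝ)) K volume :=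
    hcont_inner.continuousOn.integrableOn_compact hKcomp
  have hint_G : IntegrableOn (fun y => G (inner ℝ y u : ℝ)) K volume :=
    (hGcont.comp hcont_inner).continuousOn.integrableOn_compact hKcomp
  have hint_id : Integrable (fun y : EuclideanSpace ℝ (Fin d) => y) (volume.restrict K) :=
    continuous_id.continuousOn.integrableOn_compact hKcomp
  have hlin0 : ∫ y in K, (inner ℝ y u : ℝ) = 0 := by
    have e1 : ∀ y : EuclideanSpace ℝ (Fin d), (inner ℝ y u : ℝ) = (inner ℝ u y : ℝ) :=
      fun y => real_inner_comm _ _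
    simp_rw [e1]
    rw [integral_inner hint_id u, hcenter, inner_zero_right]
  have hGpos : 0 ≤ ∫ y in K, G (inner ℝ y u : ℝ) := by
    rw [step1]; exact step2
  have hM : b*σ ≤ ∫ y in K, (inner ℝ y u : ℝ)^2 := by
    have hconst : IntegrableOn (fun _ : EuclideanSpace ℝ (Fin d) => b*σ) K volume :=
      integrableOn_const (by rw [hvol]; exact ENNReal.one_ne_top)
    have hintA : IntegrableOn (fun y => (-(2*σ))*(inner ℝ y u : ℝ) + b*σ) K volume := by
      exact (hint_lin.const_mul (-(2*σ))).add hconst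
    have hmono : ∫ y in K, ((-(2*σ))*(inner ℝ y u : ℝ) + b*σ + G (inner ℝ y u : ℝ))
        ≤ ∫ y in K, (inner ℝ y u : ℝ)^2 := by
      refine setIntegral_mono_on ?_ hint_sq hKmeas fun y _ => claimA _
      exact hintA.add hint_G
    rw [integral_add hintA hint_G,
      integral_add (hint_lin.const_mul (-(2*σ))) hconst,
      integral_const_mul, hlin0, mul_zero, setIntegral_const, measureReal_def, hvolK] at hmono
    simp only [smul_eq_mul, one_mul, zero_add] at hmono
    linarith
  set S : ℝ := sSup ((fun u : EuclideanSpace ℝ (Fin d) =>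
      ∫ x in K, (inner ℝ x u : ℝ) ^ 2) '' {u | ‖u‖ = 1}) with hS
  have hMS : (∫ y in K, (inner ℝ y u : ℝ)^2) ≤ S := le_csSup hBdd ⟨u, hu, rfl⟩
  have hb2 : b^2 ≤ ((d:ℝ)+1)^2 * S := by
    have h1 : b^2 = (d*(d+2)) * (b*σ) := by
      rw [hσdef]; field_simp
    have h2 : b*σ ≤ S := le_trans hM hMS
    have h3 : (0:ℝ) < b*σ := by positivity
    nlinarith [sq_nonneg ((d:ℝ)+1)]
  calc ‖x‖ = Real.sqrt (b^2) := by rw [Real.sqrt_sq hb.le, hbdef]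
    _ ≤ Real.sqrt (((d:ℝ)+1)^2 * S) := Real.sqrt_le_sqrt hb2
    _ = ((d:ℝ)+1) * Real.sqrt S := by
        rw [Real.sqrt_mul (by positivity), Real.sqrt_sq (by positivity)]
end
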